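/- arXiv:1802.09910 — 2 statements merged into one kernel-verified Lean document; each statement's English description precedes it below -/
import Mathlib

section
/- Let h be a real-analytic germ at 0 ∈ ℝ with h(0) = 0 and h'(0) > 0, and write h(H) = H·g(H) with g real-analytic, g(0) > 0. Define r_h(x,y) = (g(H(x,y))^{1/2}·x, g(H(x,y))^{1/3}·y), where H(x,y) = y³ - x². Then r_h is a local real-analytic diffeomorphism at 0 ∈ ℝ² satisfying H(r_h(x,y)) = h(H(x,y)). -/
open Filter Topology

lemma analyticAt_rpow_const' {x : ℝ} (c : ℝ) (hx : 0 < x) :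
    AnalyticAt ℝ (fun t : ℝ => t ^ c) x := by
  have h1 : AnalyticAt ℂ (fun z : ℂ => z ^ (c : ℂ)) (x : ℂ) :=
    AnalyticAt.cpow analyticAt_id analyticAt_const (Complex.ofReal_mem_slitPlane.2 hx)
  have hA : AnalyticAt ℝ
      (fun t : ℝ => Complex.reCLM ((fun z : ℂ => z ^ (c : ℂ)) (Complex.ofRealCLM t))) x :=
    (Complex.reCLM.analyticAt _).comp ((h1.restrictScalars).comp (Complex.ofRealCLM.analyticAt x))
  refine hA.congr ?_
  filter_upwards [eventually_gt_nhds hx] with t ht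
  simp only [Complex.ofRealCLM_apply, Complex.reCLM_apply]
  rw [← Complex.ofReal_cpow ht.le, Complex.ofReal_re]

/-- For `h(H) = H·g(H)` with `g` real-analytic, `g(0) > 0`, the map
`r_h(x,y) = (g(H)^{1/2}x, g(H)^{1/3}y)`, `H = y³ - x²`, is a local real-analytic
diffeomorphism at `0 ∈ ℝ²` with `H ∘ r_h = h ∘ H`. -/
theorem rh_lifts (g : ℝ → ℝ) (hg : AnalyticAt ℝ g 0) (hg0 : 0 < g 0)
    (H : ℝ × ℝ → ℝ) (hH : H = fun p => p.2 ^ 3 - p.1 ^ 2)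
    (h : ℝ → ℝ) (hh : h = fun t => t * g t)
    (rh : ℝ × ℝ → ℝ × ℝ)
    (hrh : rh = fun p => ((g (H p)) ^ ((1:ℝ)/2) * p.1, (g (H p)) ^ ((1:ℝ)/3) * p.2)) :
    ∃ U : Set (ℝ × ℝ), IsOpen U ∧ (0:ℝ×ℝ) ∈ U ∧
      (∀ p ∈ U, AnalyticAt ℝ rh p) ∧ Set.InjOn rh U ∧
      (fderiv ℝ rh 0).det ≠ 0 ∧
      ∀ p ∈ U, H (rh p) = h (H p) := by
  -- neighborhood V of 0 where g is analytic and positive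
  have hgpos : ∀ᶠ t in 𝓝 (0:ℝ), 0 < g t := hg.continuousAt (Ioi_mem_nhds hg0)
  have hev : ∀ᶠ t in 𝓝 (0:ℝ), AnalyticAt ℝ g t ∧ 0 < g t :=
    hg.eventually_analyticAt.and hgpos
  obtain ⟨V, hV, hVo, hV0⟩ := eventually_nhds_iff.1 hev
  -- H is analytic everywhere
  have hHa : ∀ p : ℝ × ℝ, AnalyticAt ℝ H p := by
    intro p; rw [hH]
    exact (analyticAt_snd.pow 3).sub (analyticAt_fst.pow 2)
  have hHc : Continuous H := continuous_iff_continuousAt.2 fun p => (hHa p).continuousAt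
  have hH0 : H 0 = 0 := by simp [hH]
  set W : Set (ℝ × ℝ) := H ⁻¹' V with hW
  have hWo : IsOpen W := hVo.preimage hHc
  have hW0 : (0:ℝ×ℝ) ∈ W := by simp [hW, hH0, hV0]
  -- rh is analytic on W
  have hrhA : ∀ p ∈ W, AnalyticAt ℝ rh p := by
    intro p hp
    obtain ⟨hga, hgp⟩ := hV (H p) hp
    rw [hrh]
    have hgh : AnalyticAt ℝ (fun q => g (H q)) p := hga.comp (hHa p)
    have h2 : AnalyticAt ℝ (fun q => g (H q) ^ ((1:ℝ)/2)) p :=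
      AnalyticAt.comp (f := fun q => g (H q)) (analyticAt_rpow_const' _ hgp) hgh
    have h3 : AnalyticAt ℝ (fun q => g (H q) ^ ((1:ℝ)/3)) p :=
      AnalyticAt.comp (f := fun q => g (H q)) (analyticAt_rpow_const' _ hgp) hgh
    exact (h2.mul analyticAt_fst).prod (h3.mul analyticAt_snd)
  -- the key equation on W
  have heq : ∀ p ∈ W, H (rh p) = h (H p) := by
    intro p hp
    have hgp : 0 < g (H p) := (hV (H p) hp).2
    have e2 : (g (H p) ^ ((1:ℝ)/2)) ^ 2 = g (H p) := by
      rw [← Real.rpow_natCast (g (H p) ^ ((1:ℝ)/2)) 2, ← Real.rpow_mul hgp.le]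
      norm_num
    have e3 : (g (H p) ^ ((1:ℝ)/3)) ^ 3 = g (H p) := by
      rw [← Real.rpow_natCast (g (H p) ^ ((1:ℝ)/3)) 3, ← Real.rpow_mul hgp.le]
      norm_num
    have hHapp : ∀ q : ℝ × ℝ, H q = q.2 ^ 3 - q.1 ^ 2 := fun q => by rw [hH]
    rw [hh]
    simp only []
    rw [hHapp (rh p), hrh]
    simp only [mul_pow, e2, e3]
    rw [hHapp p]; ring
  -- the derivative at 0
  have ha0 : (0:ℝ) < g (H 0) ^ ((1:ℝ)/2) := by
    rw [hH0]; exact Real.rpow_pos_of_pos hg0 _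
  have hb0 : (0:ℝ) < g (H 0) ^ ((1:ℝ)/3) := by
    rw [hH0]; exact Real.rpow_pos_of_pos hg0 _
  set a : ℝ × ℝ → ℝ := fun q => g (H q) ^ ((1:ℝ)/2) with hadef
  set b : ℝ × ℝ → ℝ := fun q => g (H q) ^ ((1:ℝ)/3) with hbdef
  have hgh0 : AnalyticAt ℝ (fun q => g (H q)) (0:ℝ×ℝ) := ((hV (H 0) hW0).1).comp (hHa 0)
  have haA : AnalyticAt ℝ a 0 :=
    AnalyticAt.comp (f := fun q => g (H q)) (analyticAt_rpow_const' _ (hV (H 0) hW0).2) hgh0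
  have hbA : AnalyticAt ℝ b 0 :=
    AnalyticAt.comp (f := fun q => g (H q)) (analyticAt_rpow_const' _ (hV (H 0) hW0).2) hgh0
  set e : (ℝ × ℝ) ≃L[ℝ] (ℝ × ℝ) :=
    (ContinuousLinearEquiv.unitsEquivAut ℝ (Units.mk0 (a 0) ha0.ne')).prodCongr
      (ContinuousLinearEquiv.unitsEquivAut ℝ (Units.mk0 (b 0) hb0.ne')) with hedef
  have hd : HasFDerivAt rh (e : (ℝ × ℝ) →L[ℝ] (ℝ × ℝ)) 0 := by
    have h1 : HasFDerivAt (fun q : ℝ × ℝ => a q * q.1)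
        (a 0 • ContinuousLinearMap.fst ℝ ℝ ℝ + (0:ℝ×ℝ).1 • fderiv ℝ a 0) 0 :=
      haA.differentiableAt.hasFDerivAt.mul (hasFDerivAt_fst)
    have h2 : HasFDerivAt (fun q : ℝ × ℝ => b q * q.2)
        (b 0 • ContinuousLinearMap.snd ℝ ℝ ℝ + (0:ℝ×ℝ).2 • fderiv ℝ b 0) 0 :=
      hbA.differentiableAt.hasFDerivAt.mul (hasFDerivAt_snd)
    have h12 := h1.prodMk h2
    have hfun : rh = fun q : ℝ × ℝ => (a q * q.1, b q * q.2) := by rw [hrh]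
    rw [hfun]
    refine h12.congr_fderiv ?_
    refine ContinuousLinearMap.ext fun q => ?_
    simp [hedef, ContinuousLinearEquiv.prodCongr_apply, ContinuousLinearEquiv.unitsEquivAut_apply,
      ContinuousLinearMap.prod_apply, mul_comm, Prod.ext_iff]
  have hfd : fderiv ℝ rh 0 = (e : (ℝ × ℝ) →L[ℝ] (ℝ × ℝ)) := hd.fderiv
  have hdet : (fderiv ℝ rh 0).det ≠ 0 := by
    rw [hfd]
    have : (e : (ℝ × ℝ) →L[ℝ] (ℝ × ℝ)).det = LinearMap.det (e.toLinearEquiv : (ℝ×ℝ) →ₗ[ℝ] (ℝ×ℝ)) := rfl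
    rw [this]
    exact e.toLinearEquiv.isUnit_det'.ne_zero
  -- injectivity via inverse function theorem
  have hC : ContDiffAt ℝ 1 rh 0 := (hrhA 0 hW0).contDiffAt
  have hs : HasStrictFDerivAt rh (fderiv ℝ rh 0) 0 := hC.hasStrictFDerivAt one_ne_zero
  rw [hfd] at hs
  set Φ := hs.toOpenPartialHomeomorph rh with hΦ
  have hΦc : (Φ : ℝ × ℝ → ℝ × ℝ) = rh := hs.toOpenPartialHomeomorph_coe
  refine ⟨Φ.source ∩ W, Φ.open_source.inter hWo,
    ⟨hs.mem_toOpenPartialHomeomorph_source, hW0⟩,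
    fun p hp => hrhA p hp.2, ?_, hdet, fun p hp => heq p hp.2⟩
  have := Φ.injOn
  rw [hΦc] at this
  exact this.mono Set.inter_subset_left
end

section
/- With H(x,y) = y³ - x² and r_h(x,y) = (g(H)^{1/2} x, g(H)^{1/3} y) for a real-analytic g with g(0) > 0, the Jacobian determinant of r_h equals g(H)^{-1/6}·(g'(H)·H + g(H)). -/
open Filter

lemma det_prod (L1 L2 : ℝ × ℝ →L[ℝ] ℝ) :
    (L1.prod L2).det = L1 (1,0) * L2 (0,1) - L1 (0,1) * L2 (1,0) := by
  have : (L1.prod L2).det =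
      LinearMap.det ((L1.prod L2) : ℝ × ℝ →ₗ[ℝ] ℝ × ℝ) := rfl
  rw [this, ← LinearMap.det_toMatrix (Module.Basis.finTwoProd ℝ), Matrix.det_fin_two]
  simp [LinearMap.toMatrix_apply, Module.Basis.finTwoProd_zero, Module.Basis.finTwoProd_one,
    Module.Basis.coe_finTwoProd_repr]


/-- Jacobian determinant of `r_h(x,y) = (g(H)^{1/2}x, g(H)^{1/3}y)` with
`H = y³ - x²`: `det(Dr_h) = g(H)^{-1/6}·(g'(H)·H + g(H))` near the origin. -/
theorem rh_jacobian (g : ℝ → ℝ) (hg : AnalyticAt ℝ g 0) (hg0 : 0 < g 0)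
    (H : ℝ × ℝ → ℝ) (hH : H = fun p => p.2 ^ 3 - p.1 ^ 2)
    (rh : ℝ × ℝ → ℝ × ℝ)
    (hrh : rh = fun p => ((g (H p)) ^ ((1:ℝ)/2) * p.1, (g (H p)) ^ ((1:ℝ)/3) * p.2)) :
    ∀ᶠ p in nhds (0:ℝ×ℝ),
      (fderiv ℝ rh p).det
        = (g (H p)) ^ (-(1:ℝ)/6) * (deriv g (H p) * H p + g (H p)) := by
  subst hH hrh
  set H : ℝ × ℝ → ℝ := fun p => p.2 ^ 3 - p.1 ^ 2 with hHdef
  have hHc : ContinuousAt H 0 := by fun_prop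
  have hH0 : H 0 = 0 := by simp [hHdef]
  have hHt : Tendsto H (nhds 0) (nhds 0) := by
    simpa [hH0] using hHc.tendsto
  have E1 : ∀ᶠ p in nhds (0:ℝ×ℝ), 0 < g (H p) :=
    hHt.eventually (hg.continuousAt.eventually (eventually_gt_nhds hg0))
  have E2 : ∀ᶠ p in nhds (0:ℝ×ℝ), DifferentiableAt ℝ g (H p) :=
    hHt.eventually (hg.eventually_analyticAt.mono fun t ht => ht.differentiableAt)
  filter_upwards [E1, E2] with p hpos hdiff
  set x := p.1
  set y := p.2
  set s := g (H p) with hs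
  set c := deriv g (H p) with hc
  -- derivative of H
  have hHp : HasFDerivAt H
      ((3 * y^2) • (ContinuousLinearMap.snd ℝ ℝ ℝ)
        - (2 * x) • (ContinuousLinearMap.fst ℝ ℝ ℝ)) p := by
    have h1 := (hasDerivAt_pow 3 y).comp_hasFDerivAt p
      (hasFDerivAt_snd (𝕜 := ℝ) (E := ℝ) (F := ℝ) (p := p))
    have h2 := (hasDerivAt_pow 2 x).comp_hasFDerivAt p
      (hasFDerivAt_fst (𝕜 := ℝ) (E := ℝ) (F := ℝ) (p := p))
    have h3 : (3:ℝ) * y ^ 2 = ((3:ℕ):ℝ) * y ^ (3 - 1) := by norm_num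
    have h4 : (2:ℝ) * x = ((2:ℕ):ℝ) * x ^ (2 - 1) := by norm_num
    rw [h3, h4]
    exact h1.sub h2
  set LH := (3 * y^2) • (ContinuousLinearMap.snd ℝ ℝ ℝ)
        - (2 * x) • (ContinuousLinearMap.fst ℝ ℝ ℝ) with hLH
  have hgH : HasFDerivAt (fun p => g (H p)) (c • LH) p :=
    (hdiff.hasDerivAt).comp_hasFDerivAt p hHp
  have hr2 : HasDerivAt (fun t : ℝ => t ^ ((1:ℝ)/2)) ((1/2) * s ^ ((1:ℝ)/2 - 1)) s :=
    Real.hasDerivAt_rpow_const (Or.inl hpos.ne')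
  have hr3 : HasDerivAt (fun t : ℝ => t ^ ((1:ℝ)/3)) ((1/3) * s ^ ((1:ℝ)/3 - 1)) s :=
    Real.hasDerivAt_rpow_const (Or.inl hpos.ne')
  have hφ : HasFDerivAt (fun p => (g (H p)) ^ ((1:ℝ)/2))
      (((1/2) * s ^ ((1:ℝ)/2 - 1)) • (c • LH)) p :=
    (hr2.comp_hasFDerivAt p hgH :)
  have hψ : HasFDerivAt (fun p => (g (H p)) ^ ((1:ℝ)/3))
      (((1/3) * s ^ ((1:ℝ)/3 - 1)) • (c • LH)) p :=
    (hr3.comp_hasFDerivAt p hgH :)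
  have hu := hφ.mul (hasFDerivAt_fst (𝕜 := ℝ) (E := ℝ) (F := ℝ) (p := p))
  have hw := hψ.mul (hasFDerivAt_snd (𝕜 := ℝ) (E := ℝ) (F := ℝ) (p := p))
  have hL : HasFDerivAt (fun p => ((g (H p)) ^ ((1:ℝ)/2) * p.1, (g (H p)) ^ ((1:ℝ)/3) * p.2)) _ p :=
    hu.prodMk hw
  rw [hL.fderiv, det_prod]
  simp only [ContinuousLinearMap.add_apply, ContinuousLinearMap.smul_apply, hLH,
    ContinuousLinearMap.sub_apply, ContinuousLinearMap.coe_fst', ContinuousLinearMap.coe_snd',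
    smul_eq_mul]
  -- now pure algebra
  set t := s ^ ((1:ℝ)/6) with ht
  have htpos : 0 < t := Real.rpow_pos_of_pos hpos _
  have e1 : s ^ ((1:ℝ)/2) = t ^ 3 := by
    rw [ht, ← Real.rpow_natCast (s ^ ((1:ℝ)/6)) 3, ← Real.rpow_mul hpos.le]; norm_num
  have e2 : s ^ ((1:ℝ)/3) = t ^ 2 := by
    rw [ht, ← Real.rpow_natCast (s ^ ((1:ℝ)/6)) 2, ← Real.rpow_mul hpos.le]; norm_num
  have e3 : s ^ ((1:ℝ)/2 - 1) = (t ^ 3)⁻¹ := by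
    rw [ht, ← Real.rpow_natCast (s ^ ((1:ℝ)/6)) 3, ← Real.rpow_mul hpos.le,
      ← Real.rpow_neg hpos.le]; norm_num
  have e4 : s ^ ((1:ℝ)/3 - 1) = (t ^ 4)⁻¹ := by
    rw [ht, ← Real.rpow_natCast (s ^ ((1:ℝ)/6)) 4, ← Real.rpow_mul hpos.le,
      ← Real.rpow_neg hpos.le]; norm_num
  have e5 : s ^ (-(1:ℝ)/6) = t⁻¹ := by
    rw [ht, ← Real.rpow_neg hpos.le]; norm_num
  have e6 : s = t ^ 6 := by
    rw [ht, ← Real.rpow_natCast (s ^ ((1:ℝ)/6)) 6, ← Real.rpow_mul hpos.le]; norm_num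
  have hHval : H p = y ^ 3 - x ^ 2 := rfl
  rw [e1, e2, e3, e4, e5, hHval]
  rw [e6] at *
  field_simp
  ring
end
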